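/- Let n and b be natural numbers with b ≤ n, let α_0, …, α_n be rational numbers, and set P = Σ_{i=0}^n α_i P_{n,i}. Then P has degree at most n-b if and only if for every j with 0 ≤ j ≤ b-1 one has Σ_{i=0}^{n-j} α_i · binom(n-j, i) = 0, where binom denotes the ordinary binomial coefficient. -/

import Mathlib

open Polynomial

/-- The binomial coefficient polynomial `C(x,k) = x(x-1)⋯(x-k+1)/k!` in `ℚ[X]`. -/
noncomputable def binomialPoly (k : ℕ) : Polynomial ℚ :=
  (k.factorial : ℚ)⁻¹ • descPochhammer ℚ k

/-- The polynomial `P_{n,i}(d) = (-1)^i · C(-d, i) · C(d+n, n-i)`. -/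
noncomputable def Pni (n i : ℕ) : Polynomial ℚ :=
  (-1 : ℚ) ^ i •
    ((binomialPoly i).comp (-Polynomial.X) *
      (binomialPoly (n - i)).comp (Polynomial.X + Polynomial.C (n : ℚ)))

/-- The auxiliary basis polynomial `M_m(d) = C(d+m-1, m)`. -/
noncomputable def Mm (m : ℕ) : Polynomial ℚ :=
  (binomialPoly m).comp (Polynomial.X + Polynomial.C ((m : ℚ) - 1))

lemma binomialPoly_eval_nat (k a : ℕ) : (binomialPoly k).eval (a : ℚ) = a.choose k := by
  rw [binomialPoly, eval_smul, smul_eq_mul, descPochhammer_eval_eq_descFactorial,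
    Nat.descFactorial_eq_factorial_mul_choose]
  push_cast
  rw [← mul_assoc, inv_mul_cancel₀ (by exact_mod_cast k.factorial_ne_zero), one_mul]

lemma key_nat (e i : ℕ) : ∀ n, i ≤ n →
    (e + i).choose i * (e + 1 + n).choose (n - i) =
      ∑ m ∈ Finset.range (n + 1), m.choose i * (e + m).choose m := by
  intro n
  induction n with
  | zero =>
    intro hi
    interval_cases i
    simp
  | succ n ih =>
    intro hi
    rcases Nat.lt_or_ge i (n+1) with h | h
    · have hi' : i ≤ n := by omega
      rw [Finset.sum_range_succ, ← ih hi']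
      have h1 : n + 1 - i = (n - i) + 1 := by omega
      have h2 : e + 1 + (n + 1) = (e + 1 + n) + 1 := by omega
      rw [h1, h2, Nat.choose_succ_succ, Nat.mul_add]
      congr 1
      have h3 : n - i + 1 = (n + 1) - i := by omega
      rw [Nat.succ_eq_add_one, h3]
      have key := Nat.choose_mul (n := e + n + 1) (k := n + 1)
        (show n + 1 - i ≤ n + 1 by omega)
      have h4 : e + n + 1 - (n + 1 - i) = e + i := by omega
      have h5 : n + 1 - (n + 1 - i) = i := by omega
      rw [h4, h5] at key
      rw [show e + 1 + n = e + n + 1 by omega, show e + (n+1) = e + n + 1 by omega]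
      rw [mul_comm, ← key, Nat.choose_symm (show i ≤ n + 1 by omega)]
      ring
    · have hi2 : i = n + 1 := by omega
      subst hi2
      rw [Finset.sum_range_succ, Nat.sub_self, Nat.choose_zero_right, Nat.mul_one,
        Nat.choose_self, Nat.one_mul, Finset.sum_eq_zero, Nat.zero_add]
      intro m hm
      rw [Nat.choose_eq_zero_of_lt (Finset.mem_range.mp hm), Nat.zero_mul]

lemma eval_Mm (m e : ℕ) : (Mm m).eval ((e : ℚ) + 1) = ((e + m).choose m : ℚ) := by
  rw [Mm, eval_comp]
  simp only [eval_add, eval_X, eval_C]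
  rw [show (e : ℚ) + 1 + ((m : ℚ) - 1) = ((e + m : ℕ) : ℚ) by push_cast; ring,
    binomialPoly_eval_nat]

lemma eval_Pni (n i e : ℕ) :
    (Pni n i).eval ((e : ℚ) + 1) =
      ((e + i).choose i : ℚ) * ((e + 1 + n).choose (n - i) : ℚ) := by
  rw [Pni, eval_smul, smul_eq_mul, eval_mul, eval_comp, eval_comp]
  simp only [eval_add, eval_X, eval_C, eval_neg]
  rw [show (e : ℚ) + 1 + (n : ℚ) = ((e + 1 + n : ℕ) : ℚ) by push_cast; ring,
    binomialPoly_eval_nat]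
  rw [binomialPoly, eval_smul, smul_eq_mul]
  rw [descPochhammer_eval_eq_ascPochhammer,
    show -((e : ℚ) + 1) - (i : ℚ) + 1 = -((e + i : ℕ) : ℚ) by push_cast; ring,
    ascPochhammer_eval_neg_eq_descPochhammer, descPochhammer_eval_eq_descFactorial,
    Nat.descFactorial_eq_factorial_mul_choose]
  push_cast
  field_simp
  ring_nf
  rw [mul_comm i 2, pow_mul]
  norm_num

lemma Pni_eq (n i : ℕ) (hi : i ≤ n) :
    Pni n i = ∑ m ∈ Finset.range (n + 1), ((m.choose i : ℚ)) • Mm m := by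
  apply eq_of_infinite_eval_eq
  have hinj : Function.Injective (fun e : ℕ => (e : ℚ) + 1) := by
    intro a b h
    simp only [add_left_inj, Nat.cast_inj] at h
    exact h
  refine (Set.infinite_range_of_injective hinj).mono ?_
  rintro x ⟨e, rfl⟩
  show (Pni n i).eval _ = _
  rw [eval_Pni, eval_finset_sum]
  simp only [eval_smul, smul_eq_mul, eval_Mm]
  exact_mod_cast congrArg (fun t : ℕ => (t : ℚ)) (key_nat e i n hi)

lemma natDegree_Mm_le (m : ℕ) : (Mm m).natDegree ≤ m := by
  refine le_trans (natDegree_comp_le) ?_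
  rw [natDegree_X_add_C, mul_one]
  exact le_trans (natDegree_smul_le _ _) (by rw [descPochhammer_natDegree])

lemma coeff_Mm_self (m : ℕ) : (Mm m).coeff m = ((m.factorial : ℚ))⁻¹ := by
  rw [Mm, binomialPoly, smul_comp, coeff_smul]
  have hmonic : ((descPochhammer ℚ m).comp (X + C ((m : ℚ) - 1))).Monic :=
    (monic_descPochhammer ℚ m).comp_X_add_C _
  have hdeg : ((descPochhammer ℚ m).comp (X + C ((m : ℚ) - 1))).natDegree = m := by
    rw [natDegree_comp, natDegree_X_add_C, mul_one, descPochhammer_natDegree]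
  have hc := hmonic.coeff_natDegree
  rw [hdeg] at hc
  rw [hc, smul_eq_mul, mul_one]

lemma coeff_Mm_of_lt {k m : ℕ} (h : k < m) : (Mm k).coeff m = 0 :=
  coeff_eq_zero_of_natDegree_lt (lt_of_le_of_lt (natDegree_Mm_le k) h)

lemma degree_Mm_le (m : ℕ) : (Mm m).degree ≤ (m : WithBot ℕ) :=
  natDegree_le_iff_degree_le.mp (natDegree_Mm_le m)

/-- Let `b ≤ n` and `P = Σ_{i=0}^n α_i P_{n,i}`. Then `P` has degree at most `n - b`
if and only if `Σ_{i=0}^{n-j} α_i · binom(n-j, i) = 0` for every `0 ≤ j ≤ b-1`. -/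
theorem Pni_degree_le_iff (n b : ℕ) (hb : b ≤ n) (α : ℕ → ℚ) :
    (∑ i ∈ Finset.range (n + 1), α i • Pni n i).degree ≤ ((n - b : ℕ) : WithBot ℕ) ↔
    ∀ j < b, ∑ i ∈ Finset.range (n - j + 1), α i * ((n - j).choose i : ℚ) = 0 := by
  set S : ℕ → ℚ := fun m => ∑ i ∈ Finset.range (n + 1), α i * (m.choose i : ℚ) with hS
  have hP : (∑ i ∈ Finset.range (n + 1), α i • Pni n i) =
      ∑ m ∈ Finset.range (n + 1), S m • Mm m := by
    have h1 : ∀ i ∈ Finset.range (n + 1), α i • Pni n i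
        = ∑ m ∈ Finset.range (n + 1), (α i * (m.choose i : ℚ)) • Mm m := by
      intro i hi
      rw [Pni_eq n i (Nat.lt_succ_iff.mp (Finset.mem_range.mp hi)), Finset.smul_sum]
      exact Finset.sum_congr rfl fun m _ => by rw [smul_smul]
    rw [Finset.sum_congr rfl h1, Finset.sum_comm]
    exact Finset.sum_congr rfl fun m _ => by rw [← Finset.sum_smul]
  have hSsum : ∀ m ≤ n, S m =
      ∑ i ∈ Finset.range (m + 1), α i * (m.choose i : ℚ) := by
    intro m hm
    refine (Finset.sum_subset (Finset.range_subset_range.mpr (by omega)) ?_).symm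
    intro i h1 h2
    rw [Nat.choose_eq_zero_of_lt (by
      simp only [Finset.mem_range] at h1 h2; omega), Nat.cast_zero, mul_zero]
  constructor
  · intro hdeg j hj
    rw [hP] at hdeg
    have coeffstep : ∀ m, m ≤ n → n - b < m → (∀ k, k ≤ n → m < k → S k = 0) → S m = 0 := by
      intro m hm1 hm2 hbig
      have hc : (∑ k ∈ Finset.range (n + 1), S k • Mm k).coeff m = 0 := by
        refine coeff_eq_zero_of_degree_lt (lt_of_le_of_lt hdeg ?_)
        exact_mod_cast hm2
      rw [finset_sum_coeff] at hc
      rw [Finset.sum_eq_single m (fun k hk hne => ?_)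
        (fun h => absurd (Finset.mem_range.mpr (by omega)) h)] at hc
      · rw [coeff_smul, coeff_Mm_self, smul_eq_mul] at hc
        rcases mul_eq_zero.mp hc with h | h
        · exact h
        · exact absurd h (inv_ne_zero (by exact_mod_cast m.factorial_ne_zero))
      · rcases lt_or_gt_of_ne hne with hlt | hgt
        · rw [coeff_smul, coeff_Mm_of_lt hlt, smul_zero]
        · rw [hbig k (Nat.lt_succ_iff.mp (Finset.mem_range.mp hk)) hgt, zero_smul, coeff_zero]
    have H : ∀ r, ∀ m, m ≤ n → n - b < m → n ≤ m + r → S m = 0 := by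
      intro r
      induction r with
      | zero =>
        intro m h1 h2 h3
        exact coeffstep m h1 h2 (fun k hk hmk => absurd hk (by omega))
      | succ r ih =>
        intro m h1 h2 h3
        exact coeffstep m h1 h2 (fun k hk hmk => ih k hk (by omega) (by omega))
    have hmain := H n (n - j) (by omega) (by omega) (by omega)
    rw [hSsum (n - j) (by omega)] at hmain
    exact hmain
  · intro hzero
    rw [hP]
    refine le_trans (Polynomial.degree_sum_le _ _) (Finset.sup_le ?_)
    intro m hm
    rcases le_or_gt m (n - b) with h | h
    · refine le_trans (degree_smul_le _ _) (le_trans (degree_Mm_le m) ?_)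
      exact_mod_cast h
    · have hmn : m ≤ n := Nat.lt_succ_iff.mp (Finset.mem_range.mp hm)
      have hSm : S m = 0 := by
        have hj : n - m < b := by omega
        have hnm : n - (n - m) = m := by omega
        have := hzero (n - m) hj
        rw [hnm] at this
        rw [hSsum m hmn]
        exact this
      rw [hSm, zero_smul, degree_zero]
      exact bot_le
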